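/- arXiv:1605.00995 — 3 statements merged into one kernel-verified Lean document; each statement's English description precedes it below -/
import Mathlib

section
/- Let κ_1 < ⋯ < κ_n be real, a_1, …, a_n > 0, and μ_0(x) = ∑_{j=1}^n a_j e^{κ_j x}. For k ∈ [n], the Wronskian τ_k(x) = Wr_x(μ_0, μ_0', …, μ_0^{(k−1)}) satisfies τ_k(x) = ∑_{1 ≤ i_1 < ⋯ < i_k ≤ n} (∏_{s=1}^k a_{i_s} e^{κ_{i_s} x}) · ∏_{1 ≤ r < s ≤ k} (κ_{i_s} − κ_{i_r})^2. In particular τ_k(x) > 0 for all real x. -/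
open Finset



lemma iterD (n : ℕ) (κ a : Fin n → ℝ) (m : ℕ) :
    iteratedDeriv m (fun y => ∑ j, a j * Real.exp (κ j * y)) =
      fun y => ∑ j, a j * κ j ^ m * Real.exp (κ j * y) := by
  induction m with
  | zero => simp
  | succ m ih =>
    rw [iteratedDeriv_succ, ih]
    funext y
    have key : HasDerivAt (fun y => ∑ j, a j * κ j ^ m * Real.exp (κ j * y))
        (∑ j, a j * κ j ^ (m + 1) * Real.exp (κ j * y)) y := by
      refine HasDerivAt.fun_sum fun j _ => ?_
      have h1 : HasDerivAt (fun y => κ j * y) (κ j) y := by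
        simpa using (hasDerivAt_id y).const_mul (κ j)
      have h2 := (h1.exp).const_mul (a j * κ j ^ m)
      exact h2.congr_deriv (by ring)
    exact key.deriv

open scoped Classical in
lemma detExpand (n : ℕ) (κ c : Fin n → ℝ) (k : ℕ) :
    Matrix.det (Matrix.of fun r s : Fin k => ∑ j, c j * κ j ^ ((r : ℕ) + (s : ℕ))) =
      ∑ f : Fin k → Fin n,
        (∏ r, c (f r) * κ (f r) ^ (r : ℕ)) * ∏ i, ∏ j ∈ Finset.Ioi i, (κ (f j) - κ (f i)) := by
  have h1 : (Matrix.of fun r s : Fin k => ∑ j, c j * κ j ^ ((r : ℕ) + (s : ℕ)))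
      = fun r : Fin k => ∑ j, (fun s : Fin k => (c j * κ j ^ (r : ℕ)) * κ j ^ (s : ℕ)) := by
    funext r s
    simp only [Matrix.of_apply, Finset.sum_apply, pow_add]
    ring_nf
  have h2 := (Matrix.detRowAlternating : (Fin k → ℝ) [⋀^Fin k]→ₗ[ℝ] ℝ).toMultilinearMap.map_sum
    (g := fun (r : Fin k) (j : Fin n) => fun s : Fin k => (c j * κ j ^ (r : ℕ)) * κ j ^ (s : ℕ))
  rw [Matrix.det, h1]
  erw [h2]
  refine Finset.sum_congr rfl fun f _ => ?_
  have h3 : (Matrix.detRowAlternating (fun r : Fin k =>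
        fun s : Fin k => (c (f r) * κ (f r) ^ (r : ℕ)) * κ (f r) ^ (s : ℕ)))
      = Matrix.det (Matrix.of fun r s : Fin k =>
          (c (f r) * κ (f r) ^ (r : ℕ)) * κ (f r) ^ (s : ℕ)) := rfl
  erw [h3]
  have h4 : (Matrix.of fun r s : Fin k => (c (f r) * κ (f r) ^ (r : ℕ)) * κ (f r) ^ (s : ℕ))
      = Matrix.of fun r s : Fin k =>
        (fun i => c (f i) * κ (f i) ^ (i : ℕ)) r * Matrix.vandermonde (κ ∘ f) r s := rfl
  rw [h4, Matrix.det_mul_column (fun r => c (f r) * κ (f r) ^ (r : ℕ))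
    (Matrix.vandermonde (κ ∘ f)), Matrix.det_vandermonde]
  rfl

lemma permSum (k : ℕ) (w d : Fin k → ℝ) :
    ∑ σ : Equiv.Perm (Fin k),
        (∏ r, d (σ r) * w (σ r) ^ (r : ℕ)) * ∏ i, ∏ j ∈ Finset.Ioi i, (w (σ j) - w (σ i)) =
      (∏ s, d s) * ∏ r, ∏ s ∈ Finset.Ioi r, (w s - w r) ^ 2 := by
  have hperm : ∀ σ : Equiv.Perm (Fin k),
      (∏ i, ∏ j ∈ Finset.Ioi i, (w (σ j) - w (σ i)))
        = ((Equiv.Perm.sign σ : ℤ) : ℝ) * ∏ i, ∏ j ∈ Finset.Ioi i, (w j - w i) := by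
    intro σ
    have hv : Matrix.vandermonde (w ∘ σ) = (Matrix.vandermonde w).submatrix σ id := rfl
    calc (∏ i, ∏ j ∈ Finset.Ioi i, (w (σ j) - w (σ i)))
        = Matrix.det (Matrix.vandermonde (w ∘ σ)) := (Matrix.det_vandermonde _).symm
      _ = ((Equiv.Perm.sign σ : ℤ) : ℝ) * Matrix.det (Matrix.vandermonde w) := by
          rw [hv, Matrix.det_permute]
      _ = _ := by rw [Matrix.det_vandermonde]
  have hsum : ∑ σ : Equiv.Perm (Fin k), ((Equiv.Perm.sign σ : ℤ) : ℝ) * ∏ r, w (σ r) ^ (r : ℕ)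
      = ∏ i, ∏ j ∈ Finset.Ioi i, (w j - w i) := by
    rw [← Matrix.det_vandermonde w, Matrix.det_apply']
    rfl
  calc ∑ σ : Equiv.Perm (Fin k),
        (∏ r, d (σ r) * w (σ r) ^ (r : ℕ)) * ∏ i, ∏ j ∈ Finset.Ioi i, (w (σ j) - w (σ i))
      = ∑ σ : Equiv.Perm (Fin k), ((∏ s, d s) * (∏ i, ∏ j ∈ Finset.Ioi i, (w j - w i))) *
          (((Equiv.Perm.sign σ : ℤ) : ℝ) * ∏ r, w (σ r) ^ (r : ℕ)) := by
        refine Finset.sum_congr rfl fun σ _ => ?_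
        rw [hperm σ, Finset.prod_mul_distrib, Equiv.prod_comp σ d]
        ring
    _ = ((∏ s, d s) * (∏ i, ∏ j ∈ Finset.Ioi i, (w j - w i))) *
          ∑ σ : Equiv.Perm (Fin k), ((Equiv.Perm.sign σ : ℤ) : ℝ) * ∏ r, w (σ r) ^ (r : ℕ) := by
        rw [← Finset.mul_sum]
    _ = (∏ s, d s) * ∏ r, ∏ s ∈ Finset.Ioi r, (w s - w r) ^ 2 := by
        rw [hsum]
        have hVV : (∏ i, ∏ j ∈ Finset.Ioi i, (w j - w i)) *
            (∏ i, ∏ j ∈ Finset.Ioi i, (w j - w i))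
            = ∏ r, ∏ s ∈ Finset.Ioi r, (w s - w r) ^ 2 := by
          rw [← Finset.prod_mul_distrib]
          refine Finset.prod_congr rfl fun i _ => ?_
          rw [← Finset.prod_mul_distrib]
          exact Finset.prod_congr rfl fun j _ => (sq _).symm
        rw [mul_assoc, hVV]

open scoped Classical in
lemma symmSum (n k : ℕ) (κ c : Fin n → ℝ) :
    (∑ f : Fin k → Fin n,
        (∏ r, c (f r) * κ (f r) ^ (r : ℕ)) * ∏ i, ∏ j ∈ Finset.Ioi i, (κ (f j) - κ (f i))) =
      ∑ ι : {ι : Fin k → Fin n // StrictMono ι}, (∏ s, c (ι.1 s)) *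
        ∏ r, ∏ s ∈ Finset.Ioi r, (κ (ι.1 s) - κ (ι.1 r)) ^ 2 := by
  set G : (Fin k → Fin n) → ℝ := fun f =>
    (∏ r, c (f r) * κ (f r) ^ (r : ℕ)) * ∏ i, ∏ j ∈ Finset.Ioi i, (κ (f j) - κ (f i)) with hG
  have hzero : ∀ f : Fin k → Fin n, ¬ Function.Injective f → G f = 0 := by
    intro f hf
    simp only [Function.Injective] at hf
    push_neg at hf
    obtain ⟨a, b, hab, hne⟩ := hf
    have key : ∀ i j : Fin k, i < j → f i = f j → G f = 0 := by
      intro i j hlt hij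
      have h1 : ∏ j' ∈ Finset.Ioi i, (κ (f j') - κ (f i)) = 0 :=
        Finset.prod_eq_zero (Finset.mem_Ioi.2 hlt) (by rw [hij]; ring)
      rw [hG]
      simp only
      rw [show (∏ i' : Fin k, ∏ j' ∈ Finset.Ioi i', (κ (f j') - κ (f i'))) = 0 from
        Finset.prod_eq_zero (Finset.mem_univ i) h1, mul_zero]
    rcases hne.lt_or_gt with h | h
    · exact key a b h hab
    · exact key b a h hab.symm
  have hstep1 : (∑ f : Fin k → Fin n, G f) =
      ∑ f ∈ Finset.univ.filter (fun f : Fin k → Fin n => Function.Injective f), G f := by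
    refine (Finset.sum_filter_of_ne ?_).symm
    intro f _ hGf
    by_contra h
    exact hGf (hzero f h)
  rw [hstep1]
  have hstep2 : (∑ f ∈ Finset.univ.filter (fun f : Fin k → Fin n => Function.Injective f), G f)
      = ∑ p : {ι : Fin k → Fin n // StrictMono ι} × Equiv.Perm (Fin k), G (p.1.1 ∘ p.2) := by
    refine Finset.sum_bij' (i := fun f hf =>
        (⟨f ∘ Tuple.sort f, ?_⟩, (Tuple.sort f)⁻¹)) (j := fun p _ => p.1.1 ∘ ⇑p.2)
      (fun f hf => Finset.mem_univ _) (fun p _ => ?_) (fun f hf => ?_) (fun p _ => ?_)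
      (fun f hf => ?_)
    · -- strict mono
      have hinj : Function.Injective f := (Finset.mem_filter.1 hf).2
      exact (Tuple.monotone_sort f).strictMono_of_injective
        (hinj.comp (Tuple.sort f).injective)
    · -- j maps into filter
      exact Finset.mem_filter.2 ⟨Finset.mem_univ _, p.1.2.injective.comp p.2.injective⟩
    · -- left inverse
      funext y
      simp [Function.comp]
    · -- right inverse
      obtain ⟨ι, σ⟩ := p
      have hinj : Function.Injective (ι.1 ∘ ⇑σ) := ι.2.injective.comp σ.injective
      have hmono1 : Monotone ((ι.1 ∘ ⇑σ) ∘ ⇑(Tuple.sort (ι.1 ∘ ⇑σ))) :=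
        Tuple.monotone_sort _
      have hmono2 : Monotone ((ι.1 ∘ ⇑σ) ∘ ⇑σ⁻¹) := by
        have : (ι.1 ∘ ⇑σ) ∘ ⇑σ⁻¹ = ι.1 := by
          funext y; simp [Function.comp]
        rw [this]; exact ι.2.monotone
      have hu := Tuple.unique_monotone hmono1 hmono2
      have hsort : Tuple.sort (ι.1 ∘ ⇑σ) = σ⁻¹ := by
        apply Equiv.coe_fn_injective
        funext y
        exact hinj (congrFun hu y)
      simp only [hsort]
      refine Prod.ext ?_ (by simp)
      apply Subtype.ext
      simp only
      funext y; simp [Function.comp]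
    · -- values
      congr 1
      funext y
      simp [Function.comp]
  rw [hstep2, Fintype.sum_prod_type]
  refine Finset.sum_congr rfl fun ι _ => ?_
  have := permSum k (κ ∘ ι.1) (c ∘ ι.1)
  simpa [Function.comp, hG] using this



open scoped Classical in
theorem stmt_7 (n : ℕ) (κ a : Fin n → ℝ) (hκ : StrictMono κ) (ha : ∀ j, 0 < a j)
    (k : ℕ) (hk1 : 1 ≤ k) (hkn : k ≤ n) (x : ℝ) :
    Matrix.det (Matrix.of fun r s : Fin k =>
        iteratedDeriv ((r : ℕ) + (s : ℕ)) (fun y => ∑ j, a j * Real.exp (κ j * y)) x) =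
        ∑ ι : {ι : Fin k → Fin n // StrictMono ι},
          (∏ s, a (ι.1 s) * Real.exp (κ (ι.1 s) * x)) *
            ∏ r, ∏ s ∈ Finset.Ioi r, (κ (ι.1 s) - κ (ι.1 r)) ^ 2 ∧
      0 < Matrix.det (Matrix.of fun r s : Fin k =>
        iteratedDeriv ((r : ℕ) + (s : ℕ)) (fun y => ∑ j, a j * Real.exp (κ j * y)) x) := by
  set c : Fin n → ℝ := fun j => a j * Real.exp (κ j * x) with hc
  have hMat : (Matrix.of fun r s : Fin k =>
      iteratedDeriv ((r : ℕ) + (s : ℕ)) (fun y => ∑ j, a j * Real.exp (κ j * y)) x)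
      = Matrix.of fun r s : Fin k => ∑ j, c j * κ j ^ ((r : ℕ) + (s : ℕ)) := by
    funext r s
    simp only [Matrix.of_apply]
    rw [iterD n κ a ((r : ℕ) + (s : ℕ))]
    exact Finset.sum_congr rfl fun j _ => by rw [hc]; ring
  have heq : Matrix.det (Matrix.of fun r s : Fin k =>
      iteratedDeriv ((r : ℕ) + (s : ℕ)) (fun y => ∑ j, a j * Real.exp (κ j * y)) x)
      = ∑ ι : {ι : Fin k → Fin n // StrictMono ι},
          (∏ s, a (ι.1 s) * Real.exp (κ (ι.1 s) * x)) *
            ∏ r, ∏ s ∈ Finset.Ioi r, (κ (ι.1 s) - κ (ι.1 r)) ^ 2 := by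
    rw [hMat, detExpand n κ c k, symmSum n k κ c]
  refine ⟨heq, ?_⟩
  rw [heq]
  have hne : Nonempty {ι : Fin k → Fin n // StrictMono ι} :=
    ⟨⟨Fin.castLE hkn, Fin.strictMono_castLE hkn⟩⟩
  refine Finset.sum_pos (fun ι _ => ?_) Finset.univ_nonempty
  refine mul_pos (Finset.prod_pos fun s _ => mul_pos (ha _) (Real.exp_pos _)) ?_
  refine Finset.prod_pos fun r _ => Finset.prod_pos fun s hs => ?_
  have hrs : r < s := Finset.mem_Ioi.1 hs
  exact pow_pos (sub_pos.2 (hκ (ι.2 hrs))) 2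
end

section
/- Let A be an n × n real tridiagonal matrix with diagonal b_1, …, b_n, superdiagonal a_1, …, a_{n−1} (all a_j ≠ 0), subdiagonal 1's. Let κ be an eigenvalue of A. Let Δ̂_k(ζ) be the leading k × k principal characteristic minor and Δ_j(ζ) the trailing j × j principal characteristic minor of ζI − A. Then for every k ∈ [0, n−1]: Δ_{n−1}(κ) · Δ̂_k(κ) = (∏_{s=1}^k a_s) · Δ_{n−k−1}(κ). -/
noncomputable section

def tridiag (n : ℕ) (b a : ℕ → ℝ) : Matrix (Fin n) (Fin n) ℝ :=
  Matrix.of fun i j =>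
    if (i : ℕ) = (j : ℕ) then b i
    else if (i : ℕ) + 1 = (j : ℕ) then a i
    else if (i : ℕ) = (j : ℕ) + 1 then 1 else 0

/-- Determinant of the leading principal `j × j` submatrix of `ζ•1 - A`. -/
def leadMinor (n : ℕ) (A : Matrix (Fin n) (Fin n) ℝ) (ζ : ℝ) (j : ℕ) (hj : j ≤ n) : ℝ :=
  ((ζ • (1 : Matrix (Fin n) (Fin n) ℝ) - A).submatrix (Fin.castLE hj) (Fin.castLE hj)).det

/-- Determinant of the trailing principal `j × j` submatrix of `ζ•1 - A`. -/
def trailMinor (n : ℕ) (A : Matrix (Fin n) (Fin n) ℝ) (ζ : ℝ) (j : ℕ) (hj : j ≤ n) : ℝ :=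
  ((ζ • (1 : Matrix (Fin n) (Fin n) ℝ) - A).submatrix
    (fun s : Fin j => ⟨n - j + (s : ℕ), by have := s.2; omega⟩)
    (fun s : Fin j => ⟨n - j + (s : ℕ), by have := s.2; omega⟩)).det

end

noncomputable section

def triMat (d u l : ℕ → ℝ) (m : ℕ) : Matrix (Fin m) (Fin m) ℝ :=
  Matrix.of fun i j =>
    if (i : ℕ) = (j : ℕ) then d i
    else if (i : ℕ) + 1 = (j : ℕ) then u i
    else if (i : ℕ) = (j : ℕ) + 1 then l j else 0

lemma triMat_apply (d u l : ℕ → ℝ) (m : ℕ) (i j : Fin m) :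
    triMat d u l m i j =
      if (i : ℕ) = (j : ℕ) then d i
      else if (i : ℕ) + 1 = (j : ℕ) then u i
      else if (i : ℕ) = (j : ℕ) + 1 then l j else 0 := rfl

lemma triMat_congr {d u l d' u' l' : ℕ → ℝ} {m : ℕ}
    (hd : ∀ i, i < m → d i = d' i) (hu : ∀ i, i + 1 < m → u i = u' i)
    (hl : ∀ i, i + 1 < m → l i = l' i) : triMat d u l m = triMat d' u' l' m := by
  ext i j
  have hi := i.2; have hj := j.2
  simp only [triMat, Matrix.of_apply]
  split_ifs with h1 h2 h3
  · exact hd i (by omega)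
  · exact hu i (by omega)
  · exact hl j (by omega)
  · rfl

lemma succAbove_one_val (m : ℕ) (j : Fin (m+1)) :
    (((1 : Fin (m+2)).succAbove j) : ℕ) = if (j:ℕ) < 1 then (j:ℕ) else (j:ℕ)+1 := by
  rw [Fin.succAbove]
  split_ifs with h1 h2
  · rfl
  · exfalso; rw [Fin.lt_def] at h1; simp [Fin.val_one] at h1; rw [Fin.ext_iff, Fin.val_zero] at h1; omega
  · exfalso; rw [Fin.lt_def] at h1; simp [Fin.val_one] at h1; rw [Fin.ext_iff, Fin.val_zero] at h1; omega
  · rfl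

lemma triMat_det_first (d u l : ℕ → ℝ) (m : ℕ) :
    (triMat d u l (m + 2)).det =
      d 0 * (triMat (fun i => d (i+1)) (fun i => u (i+1)) (fun i => l (i+1)) (m+1)).det
      - u 0 * (l 0 *
        (triMat (fun i => d (i+2)) (fun i => u (i+2)) (fun i => l (i+2)) m).det) := by
  have e1 : (triMat d u l (m+2)).submatrix Fin.succ ((0 : Fin (m+2)).succAbove)
      = triMat (fun i => d (i+1)) (fun i => u (i+1)) (fun i => l (i+1)) (m+1) := by
    ext i j
    simp only [Matrix.submatrix_apply, Fin.zero_succAbove, triMat_apply, Fin.val_succ]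
    split_ifs with h1 h2 h3 h4 h5 h6 <;> first | rfl | omega | (exfalso; omega)
  have e2 : ((triMat d u l (m+2)).submatrix Fin.succ ((1 : Fin (m+2)).succAbove)).det
      = l 0 * (triMat (fun i => d (i+2)) (fun i => u (i+2)) (fun i => l (i+2)) m).det := by
    set B := (triMat d u l (m+2)).submatrix Fin.succ ((1 : Fin (m+2)).succAbove) with hB
    have hB00 : B 0 0 = l 0 := by
      simp only [hB, Matrix.submatrix_apply, triMat_apply, Fin.val_succ, succAbove_one_val]
      norm_num
    have hBz : ∀ i : Fin m, B i.succ 0 = 0 := by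
      intro i
      simp only [hB, Matrix.submatrix_apply, triMat_apply, Fin.val_succ, succAbove_one_val]
      norm_num
    have hBsub : B.submatrix Fin.succ Fin.succ
        = triMat (fun i => d (i+2)) (fun i => u (i+2)) (fun i => l (i+2)) m := by
      ext i j
      simp only [hB, Matrix.submatrix_apply, triMat_apply, Fin.val_succ, succAbove_one_val]
      norm_num
    rw [Matrix.det_succ_column_zero, Fin.sum_univ_succ]
    simp only [hBz, mul_zero, zero_mul, Finset.sum_const_zero, add_zero, hB00,
      Fin.val_zero, pow_zero, one_mul, Fin.succAbove_zero, hBsub]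
  rw [Matrix.det_succ_row_zero, Fin.sum_univ_succ, Fin.sum_univ_succ]
  have hz : ∀ j : Fin m, (triMat d u l (m+2)) 0 j.succ.succ = 0 := by
    intro j
    have hv : ((j.succ.succ : Fin (m+2)) : ℕ) = (j : ℕ) + 2 := rfl
    rw [triMat_apply, hv]
    rw [if_neg (by simp), if_neg (by simp), if_neg (by simp)]
  simp only [hz, mul_zero, zero_mul, Finset.sum_const_zero, add_zero]
  have hs1 : (Fin.succ (0 : Fin (m+1))) = (1 : Fin (m+2)) := rfl
  rw [hs1, e1, e2]
  have hA0 : (triMat d u l (m+2)) 0 0 = d 0 := by simp [triMat_apply]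
  have hA1 : (triMat d u l (m+2)) 0 1 = u 0 := by
    rw [triMat_apply]
    norm_num
  rw [hA0, hA1]
  norm_num
  ring

lemma triMat_det_rev (d u l : ℕ → ℝ) (m : ℕ) :
    (triMat d u l m).det =
      (triMat (fun i => d (m-1-i)) (fun i => l (m-2-i)) (fun j => u (m-2-j)) m).det := by
  rw [← Matrix.det_submatrix_equiv_self (Fin.revPerm) (triMat d u l m)]
  congr 1
  ext i j
  have hi := i.2; have hj := j.2
  simp only [Matrix.submatrix_apply, Fin.revPerm_apply, triMat_apply, Fin.val_rev]
  split_ifs <;> first | rfl | (congr 1; omega) | (exfalso; omega)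

lemma triMat_det_last (d u l : ℕ → ℝ) (m : ℕ) :
    (triMat d u l (m + 2)).det =
      d (m+1) * (triMat d u l (m+1)).det - u m * (l m * (triMat d u l m).det) := by
  rw [triMat_det_rev d u l (m+2), triMat_det_first]
  have c1 : (triMat (fun i => d (m+2-1-(i+1))) (fun i => l (m+2-2-(i+1)))
      (fun i => u (m+2-2-(i+1))) (m+1)).det = (triMat d u l (m+1)).det := by
    rw [triMat_det_rev d u l (m+1)]
    exact congrArg _ (triMat_congr (fun i _ => by congr 1; omega)
      (fun i _ => by congr 1; omega) (fun i _ => by congr 1; omega))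
  have c2 : (triMat (fun i => d (m+2-1-(i+2))) (fun i => l (m+2-2-(i+2)))
      (fun i => u (m+2-2-(i+2))) m).det = (triMat d u l m).det := by
    rw [triMat_det_rev d u l m]
    exact congrArg _ (triMat_congr (fun i _ => by congr 1; omega)
      (fun i _ => by congr 1; omega) (fun i _ => by congr 1; omega))
  rw [c1, c2]
  norm_num
  ring

lemma leadMinor_eq_triMat (n : ℕ) (b a : ℕ → ℝ) (ζ : ℝ) (j : ℕ) (hj : j ≤ n) :
    leadMinor n (tridiag n b a) ζ j hj =
      (triMat (fun i => ζ - b i) (fun i => -(a i)) (fun _ => -1) j).det := by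
  unfold leadMinor
  congr 1
  ext i k
  have hi := i.2; have hk := k.2
  simp only [Matrix.submatrix_apply, Matrix.sub_apply, Matrix.smul_apply, Matrix.one_apply,
    tridiag, triMat, Matrix.of_apply, Fin.coe_castLE, Fin.ext_iff, smul_eq_mul]
  split_ifs <;> first | (exfalso; omega) | ring

lemma trailMinor_eq_triMat (n : ℕ) (b a : ℕ → ℝ) (ζ : ℝ) (j : ℕ) (hj : j ≤ n) :
    trailMinor n (tridiag n b a) ζ j hj =
      (triMat (fun i => ζ - b (n-j+i)) (fun i => -(a (n-j+i))) (fun _ => -1) j).det := by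
  unfold trailMinor
  congr 1
  ext i k
  have hi := i.2; have hk := k.2
  simp only [Matrix.submatrix_apply, Matrix.sub_apply, Matrix.smul_apply, Matrix.one_apply,
    tridiag, triMat, Matrix.of_apply, Fin.ext_iff, smul_eq_mul]
  split_ifs <;> first | (exfalso; omega) | ring

lemma trailMinor_full (n : ℕ) (A : Matrix (Fin n) (Fin n) ℝ) (ζ : ℝ) :
    trailMinor n A ζ n le_rfl = (ζ • (1 : Matrix (Fin n) (Fin n) ℝ) - A).det := by
  unfold trailMinor
  have hf : (fun s : Fin n => (⟨n - n + (s:ℕ), by have := s.2; omega⟩ : Fin n)) = id := by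
    funext s; exact Fin.ext (by simp)
  rw [hf, Matrix.submatrix_id_id]

/-- total versions -/
def LD (n : ℕ) (b a : ℕ → ℝ) (ζ : ℝ) (j : ℕ) : ℝ :=
  if h : j ≤ n then leadMinor n (tridiag n b a) ζ j h else 0

def TD (n : ℕ) (b a : ℕ → ℝ) (ζ : ℝ) (j : ℕ) : ℝ :=
  if h : j ≤ n then trailMinor n (tridiag n b a) ζ j h else 0

lemma LD_eq (n : ℕ) (b a : ℕ → ℝ) (ζ : ℝ) (j : ℕ) (hj : j ≤ n) :
    LD n b a ζ j = (triMat (fun i => ζ - b i) (fun i => -(a i)) (fun _ => -1) j).det := by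
  rw [LD, dif_pos hj, leadMinor_eq_triMat]

lemma TD_eq (n : ℕ) (b a : ℕ → ℝ) (ζ : ℝ) (j : ℕ) (hj : j ≤ n) :
    TD n b a ζ j = (triMat (fun i => ζ - b (n-j+i)) (fun i => -(a (n-j+i))) (fun _ => -1) j).det := by
  rw [TD, dif_pos hj, trailMinor_eq_triMat]

lemma LD_zero (n : ℕ) (b a : ℕ → ℝ) (ζ : ℝ) : LD n b a ζ 0 = 1 := by
  rw [LD_eq n b a ζ 0 (Nat.zero_le n)]
  exact Matrix.det_fin_zero

lemma TD_zero (n : ℕ) (b a : ℕ → ℝ) (ζ : ℝ) : TD n b a ζ 0 = 1 := by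
  rw [TD_eq n b a ζ 0 (Nat.zero_le n)]
  exact Matrix.det_fin_zero

lemma LD_one (n : ℕ) (b a : ℕ → ℝ) (ζ : ℝ) (h : 1 ≤ n) : LD n b a ζ 1 = ζ - b 0 := by
  rw [LD_eq n b a ζ 1 h, Matrix.det_fin_one, triMat_apply]
  norm_num

lemma TD_n (n : ℕ) (b a : ℕ → ℝ) (ζ : ℝ) :
    TD n b a ζ n = (ζ • (1 : Matrix (Fin n) (Fin n) ℝ) - tridiag n b a).det := by
  rw [TD, dif_pos le_rfl, trailMinor_full]

lemma LD_rec (n : ℕ) (b a : ℕ → ℝ) (ζ : ℝ) (j : ℕ) (h : j + 2 ≤ n) :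
    LD n b a ζ (j+2) = (ζ - b (j+1)) * LD n b a ζ (j+1) - a j * LD n b a ζ j := by
  rw [LD_eq n b a ζ (j+2) h, LD_eq n b a ζ (j+1) (by omega), LD_eq n b a ζ j (by omega),
    triMat_det_last]
  ring

lemma TD_rec (n : ℕ) (b a : ℕ → ℝ) (ζ : ℝ) (j : ℕ) (h : j + 2 ≤ n) :
    TD n b a ζ (j+2) = (ζ - b (n-j-2)) * TD n b a ζ (j+1) - a (n-j-2) * TD n b a ζ j := by
  rw [TD_eq n b a ζ (j+2) h, TD_eq n b a ζ (j+1) (by omega), TD_eq n b a ζ j (by omega),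
    triMat_det_first]
  have c1 : (triMat (fun i => ζ - b (n-(j+2)+(i+1))) (fun i => -a (n-(j+2)+(i+1)))
      (fun _ => -1) (j+1)).det
      = (triMat (fun i => ζ - b (n-(j+1)+i)) (fun i => -a (n-(j+1)+i)) (fun _ => -1) (j+1)).det := by
    exact congrArg _ (triMat_congr (fun i _ => by congr 2; omega)
      (fun i _ => by congr 2; omega) (fun i _ => rfl))
  have c2 : (triMat (fun i => ζ - b (n-(j+2)+(i+2))) (fun i => -a (n-(j+2)+(i+2)))
      (fun _ => -1) j).det
      = (triMat (fun i => ζ - b (n-j+i)) (fun i => -a (n-j+i)) (fun _ => -1) j).det := by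
    exact congrArg _ (triMat_congr (fun i _ => by congr 2; omega)
      (fun i _ => by congr 2; omega) (fun i _ => rfl))
  rw [c1, c2]
  have hb : n - (j+2) + 0 = n - j - 2 := by omega
  rw [hb]
  ring

end

theorem stmt_14 (n : ℕ) (b a : ℕ → ℝ) (ha : ∀ j, j < n - 1 → a j ≠ 0) (κ : ℝ)
    (heig : (κ • (1 : Matrix (Fin n) (Fin n) ℝ) - tridiag n b a).det = 0)
    (k : ℕ) (hk : k ≤ n - 1) :
    trailMinor n (tridiag n b a) κ (n - 1) (by omega) *
        leadMinor n (tridiag n b a) κ k (by omega) =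
      (∏ s ∈ Finset.range k, a s) *
        trailMinor n (tridiag n b a) κ (n - k - 1) (by omega) := by
  have key : ∀ k, k ≤ n - 1 →
      TD n b a κ (n-1) * LD n b a κ k
        = (∏ s ∈ Finset.range k, a s) * TD n b a κ (n-1-k) := by
    intro k
    induction k using Nat.strong_induction_on with
    | _ k ih =>
      match k with
      | 0 =>
        intro _
        simp [LD_zero, TD_zero]
      | 1 =>
        intro h1
        have hn : 2 ≤ n := by omega
        have hrec := TD_rec n b a κ (n-2) (by omega)
        rw [show n-2+2 = n from by omega, show n-(n-2)-2 = 0 from by omega,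
          show n-2+1 = n-1 from by omega] at hrec
        rw [TD_n, heig] at hrec
        rw [LD_one n b a κ (by omega), Finset.prod_range_one,
          show n-1-1 = n-2 from by omega]
        linarith [hrec]
      | (k+2) =>
        intro h2
        have hn : k + 3 ≤ n := by omega
        have ih1 := ih k (by omega) (by omega)
        have ih2 := ih (k+1) (by omega) (by omega)
        rw [Finset.prod_range_succ] at ih2
        have lrec := LD_rec n b a κ k (by omega)
        have trec := TD_rec n b a κ (n-k-3) (by omega)
        rw [show n-k-3+2 = n-1-k from by omega, show n-(n-k-3)-2 = k+1 from by omega,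
          show n-k-3+1 = n-1-(k+1) from by omega, show n-k-3 = n-1-(k+2) from by omega] at trec
        rw [Finset.prod_range_succ, Finset.prod_range_succ, lrec]
        linear_combination (κ - b (k+1)) * ih2 - a k * ih1
          - ((∏ s ∈ Finset.range k, a s) * a k) * trec
  have e1 : trailMinor n (tridiag n b a) κ (n - 1) (by omega) = TD n b a κ (n-1) :=
    (dif_pos (by omega)).symm
  have e2 : leadMinor n (tridiag n b a) κ k (by omega) = LD n b a κ k :=
    (dif_pos (by omega)).symm
  have e3 : trailMinor n (tridiag n b a) κ (n - k - 1) (by omega) = TD n b a κ (n-k-1) :=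
    (dif_pos (by omega)).symm
  rw [e1, e2, e3, show n-k-1 = n-1-k from by omega]
  exact key k hk
end

section
/- Let n ≥ 2, fix k with 1 ≤ k ≤ n−1, and let α_1, …, α_n and α̂_1, …, α̂_n be positive reals. Then the following are equivalent: (i) for every subset I ⊆ [n] with |I| = k, ∏_{i∈I} α_i = ∏_{j∈[n]∖I} α̂_j; (ii) the product α_j α̂_j is independent of j, say α_j α̂_j = c for all j, and moreover c^k = ∏_{j=1}^n α̂_j. -/
open Finset

theorem stmt_16 (n k : ℕ) (hn : 2 ≤ n) (hk1 : 1 ≤ k) (hk : k ≤ n - 1)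
    (α αh : Fin n → ℝ) (hα : ∀ j, 0 < α j) (hαh : ∀ j, 0 < αh j) :
    (∀ I : Finset (Fin n), I.card = k → ∏ i ∈ I, α i = ∏ j ∈ Iᶜ, αh j) ↔
      ∃ c : ℝ, (∀ j, α j * αh j = c) ∧ c ^ k = ∏ j, αh j := by
  have hnpos : 0 < n := by omega
  constructor
  · intro h
    have key : ∀ i j : Fin n, α i * αh i = α j * αh j := by
      intro i j
      rcases eq_or_ne i j with rfl | hij
      · rfl
      have hsub : ({i} : Finset (Fin n)) ⊆ {j}ᶜ := by
        simp [Finset.subset_iff, hij]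
      have hcard : k ≤ ({j}ᶜ : Finset (Fin n)).card := by
        simp [Finset.card_compl]; omega
      obtain ⟨I, hiI, hIsub, hIcard⟩ :=
        Finset.exists_subsuperset_card_eq hsub (by simpa using hk1) hcard
      have hiI' : i ∈ I := hiI (Finset.mem_singleton_self i)
      have hjI : j ∉ I := fun hj => by simpa using hIsub hj
      have hjni : j ∉ I.erase i := fun hh => hjI (Finset.mem_of_mem_erase hh)
      have hI'card : (insert j (I.erase i)).card = k := by
        rw [Finset.card_insert_of_notMem hjni, Finset.card_erase_of_mem hiI']
        omega
      have h1 := h I hIcard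
      have h2 := h (insert j (I.erase i)) hI'card
      have hcompl : (insert j (I.erase i))ᶜ = insert i (Iᶜ.erase j) := by
        ext x
        by_cases hxi : x = i <;> by_cases hxj : x = j <;>
          simp_all [Finset.mem_compl, Finset.mem_insert, Finset.mem_erase]
      have hinotc : i ∉ Iᶜ.erase j := by simp [hiI']
      have hjc : j ∈ Iᶜ := by simp [hjI]
      set P := ∏ x ∈ I.erase i, α x with hPdef
      set Q := ∏ x ∈ Iᶜ.erase j, αh x with hQdef
      have hP : 0 < P := Finset.prod_pos fun x _ => hα x
      have hQ : 0 < Q := Finset.prod_pos fun x _ => hαh x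
      have h1' : α i * P = αh j * Q := by
        rw [hPdef, hQdef, Finset.mul_prod_erase I α hiI', Finset.mul_prod_erase Iᶜ αh hjc]
        exact h1
      have h2' : α j * P = αh i * Q := by
        rw [hPdef, hQdef, ← Finset.prod_insert hjni, ← Finset.prod_insert hinotc, ← hcompl]
        exact h2
      have hmain : (α i * αh i) * (P * Q) = (α j * αh j) * (P * Q) := by
        calc (α i * αh i) * (P * Q) = (α i * P) * (αh i * Q) := by ring
          _ = (αh j * Q) * (α j * P) := by rw [h1', ← h2']
          _ = (α j * αh j) * (P * Q) := by ring
      exact mul_right_cancel₀ (by positivity) hmain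
    set i0 : Fin n := ⟨0, hnpos⟩
    refine ⟨α i0 * αh i0, fun j => key j i0, ?_⟩
    obtain ⟨I, -, hIcard⟩ :=
      Finset.exists_subset_card_eq (s := (Finset.univ : Finset (Fin n))) (n := k) (by simp; omega)
    have h1 := h I hIcard
    have h2 : (α i0 * αh i0) ^ k = (∏ x ∈ I, α x) * ∏ x ∈ I, αh x := by
      rw [← Finset.prod_mul_distrib, Finset.prod_congr rfl fun x _ => key x i0,
        Finset.prod_const, hIcard]
    rw [h2, h1, ← Finset.prod_mul_prod_compl I αh]
    ring
  · rintro ⟨c, hc, hck⟩ I hIcard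
    have hIαh : 0 < ∏ x ∈ I, αh x := Finset.prod_pos fun x _ => hαh x
    have h2 : (∏ x ∈ I, α x) * ∏ x ∈ I, αh x = c ^ k := by
      rw [← Finset.prod_mul_distrib, Finset.prod_congr rfl fun x _ => hc x,
        Finset.prod_const, hIcard]
    have h3 : (∏ x ∈ I, α x) * ∏ x ∈ I, αh x = (∏ x ∈ Iᶜ, αh x) * ∏ x ∈ I, αh x := by
      rw [h2, hck, ← Finset.prod_mul_prod_compl I αh]; ring
    exact mul_right_cancel₀ (ne_of_gt hIαh) h3
end
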